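/- Let A₁ < 0 < A₂, m ≥ 1 an integer, and F : [A₁,A₂] → ℝ a C^m function with sup_{s∈[A₁,A₂], 0≤j≤m} |F^{(j)}(s)| ≤ B. Let ψ ∈ C^m(ℝⁿ) ∩ H^m(ℝⁿ) with A₁ ≤ ψ(x) ≤ A₂ for all x and with all derivatives of ψ up to order ⌈m/2⌉ bounded by M in L^∞. Then F(ψ) - F(0) ∈ H^m(ℝⁿ) and ‖F(ψ) - F(0)‖_{H^m(ℝⁿ)} ≤ Λ(B, M) ‖ψ‖_{H^m(ℝⁿ)} for some continuous function Λ independent of ψ. -/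

import Mathlib

open MeasureTheory Real Set

noncomputable section

/-- The square of the `H^m(ℝⁿ)` norm (integer `m`), built from iterated derivatives. -/
def sobolevSq (n m : ℕ) (ψ : EuclideanSpace ℝ (Fin n) → ℝ) : ℝ :=
  ∑ i ∈ Finset.range (m + 1), ∫ x, ‖iteratedFDeriv ℝ i ψ x‖ ^ 2

/-- Membership in `H^m(ℝⁿ)` (integer `m`). -/
def MemHm (n m : ℕ) (ψ : EuclideanSpace ℝ (Fin n) → ℝ) : Prop :=
  ∀ i ≤ m, Integrable fun x => ‖iteratedFDeriv ℝ i ψ x‖ ^ 2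

/-- The `H^m(ℝⁿ)` norm (integer `m`). -/
def hmNorm (n m : ℕ) (ψ : EuclideanSpace ℝ (Fin n) → ℝ) : ℝ :=
  sobolevSq n m ψ ^ (1 / 2 : ℝ)

lemma fderiv_comp_Icc {n : ℕ} {A₁ A₂ : ℝ} {G : ℝ → ℝ}
    (hG : ContDiffOn ℝ 1 G (Icc A₁ A₂)) {ψ : EuclideanSpace ℝ (Fin n) → ℝ}
    (hψ : Differentiable ℝ ψ) (hmem : ∀ x, ψ x ∈ Icc A₁ A₂) (x : EuclideanSpace ℝ (Fin n)) :
    fderiv ℝ (G ∘ ψ) x = derivWithin G (Icc A₁ A₂) (ψ x) • fderiv ℝ ψ x := by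
  have hd : HasDerivWithinAt G (derivWithin G (Icc A₁ A₂) (ψ x)) (Icc A₁ A₂) (ψ x) :=
    (hG.differentiableOn one_ne_zero _ (hmem x)).hasDerivWithinAt
  have hcomp : HasFDerivWithinAt (G ∘ ψ)
      ((ContinuousLinearMap.smulRight (1 : ℝ →L[ℝ] ℝ)
        (derivWithin G (Icc A₁ A₂) (ψ x))).comp (fderiv ℝ ψ x)) univ x :=
    hd.hasFDerivWithinAt.comp x ((hψ x).hasFDerivAt.hasFDerivWithinAt)
      (fun y _ => hmem y)
  have := (hasFDerivWithinAt_univ.mp hcomp).fderiv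
  rw [this]
  ext v
  simp [mul_comm]

set_option maxHeartbeats 1000000 in
/-- Pointwise Moser bound, by strong induction on the order of the derivative. -/
lemma moser_pointwise {n m : ℕ} {A₁ A₂ : ℝ} (hA : A₁ < A₂)
    {ψ : EuclideanSpace ℝ (Fin n) → ℝ} {B M : ℝ}
    (hψ : ContDiff ℝ (m : ℕ∞) ψ) (hmem : ∀ x, ψ x ∈ Icc A₁ A₂)
    (hMb : ∀ i ≤ (m + 1) / 2, ∀ x, ‖iteratedFDeriv ℝ i ψ x‖ ≤ M)
    (hB0 : 0 ≤ B) (hM0 : 0 ≤ M) :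
    ∀ i, 1 ≤ i → i ≤ m → ∀ G : ℝ → ℝ, ContDiffOn ℝ (i : ℕ∞) G (Icc A₁ A₂) →
      (∀ s ∈ Icc A₁ A₂, ∀ j ≤ i, |iteratedDerivWithin j G (Icc A₁ A₂) s| ≤ B) →
      ∀ x, ‖iteratedFDeriv ℝ i (G ∘ ψ) x‖ ≤
        B * (1 + m * M) ^ i * 4 ^ (i * i) *
          ∑ j ∈ Finset.Icc 1 i, ‖iteratedFDeriv ℝ j ψ x‖ := by
  have hUD : UniqueDiffOn ℝ (Icc A₁ A₂) := uniqueDiffOn_Icc hA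
  have hmM : (0:ℝ) ≤ (m:ℝ) * M := mul_nonneg (Nat.cast_nonneg m) hM0
  have hbase : (1:ℝ) ≤ 1 + (m:ℝ) * M := by linarith
  intro i
  induction i using Nat.strong_induction_on with
  | _ i IH =>
  intro hi1 him G hG hGb x
  obtain ⟨k, rfl⟩ : ∃ k, i = k + 1 := ⟨i - 1, (Nat.succ_pred_eq_of_pos hi1).symm⟩
  clear hi1
  -- notation
  set I := Icc A₁ A₂ with hI
  set S : ℝ := ∑ j ∈ Finset.Icc 1 (k + 1), ‖iteratedFDeriv ℝ j ψ x‖ with hS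
  have hS0 : 0 ≤ S := Finset.sum_nonneg fun _ _ => norm_nonneg _
  have hSmem : ∀ j, 1 ≤ j → j ≤ k + 1 → ‖iteratedFDeriv ℝ j ψ x‖ ≤ S := by
    intro j h1 h2
    exact Finset.single_le_sum (f := fun j => ‖iteratedFDeriv ℝ j ψ x‖)
      (fun _ _ => norm_nonneg _) (Finset.mem_Icc.mpr ⟨h1, h2⟩)
  -- the derivative of G within I
  set G' : ℝ → ℝ := derivWithin G I with hG'
  have hG'cd : ContDiffOn ℝ (k : ℕ∞) G' I := by
    apply hG.derivWithin hUD
    exact_mod_cast le_refl (k + 1 : ℕ∞)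
  have hG'b : ∀ s ∈ I, ∀ j ≤ k, |iteratedDerivWithin j G' I s| ≤ B := by
    intro s hs j hj
    have : iteratedDerivWithin j G' I s = iteratedDerivWithin (j + 1) G I s :=
      (congrFun iteratedDerivWithin_succ' s).symm
    rw [this]
    exact hGb s hs (j + 1) (by omega)
  -- smoothness of the pieces
  have hψk : ContDiff ℝ (k : ℕ∞) ψ := hψ.of_le (by exact_mod_cast Nat.cast_le.mpr (by omega : k ≤ m))
  have hf : ContDiff ℝ (k : ℕ∞) (fun y => G' (ψ y)) := hG'cd.comp_contDiff hψk hmem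
  have hg : ContDiff ℝ (k : ℕ∞) (fderiv ℝ ψ) := by
    apply hψ.fderiv_right
    exact_mod_cast Nat.cast_le.mpr (by omega : k + 1 ≤ m)
  -- rewrite the derivative
  have hrw : fderiv ℝ (G ∘ ψ) = fun y => G' (ψ y) • fderiv ℝ ψ y := by
    funext y
    exact fderiv_comp_Icc (hG.of_le (by exact_mod_cast Nat.cast_le.mpr (by omega : 1 ≤ k + 1)))
      (hψ.differentiable (by exact_mod_cast (by omega : m ≠ 0))) hmem y
  have hnorm : ‖iteratedFDeriv ℝ (k + 1) (G ∘ ψ) x‖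
      = ‖iteratedFDeriv ℝ k (fun y => G' (ψ y) • fderiv ℝ ψ y) x‖ := by
    rw [← norm_iteratedFDeriv_fderiv, hrw]
  rw [hnorm]
  -- Leibniz bound
  have hsmul := norm_iteratedFDeriv_smul_le (𝕜 := ℝ) hf hg x
    (le_refl ((k : ℕ∞) : WithTop ℕ∞))
  -- product trick
  have hprod : ∀ j l' : ℕ, 1 ≤ j → 1 ≤ l' → j + l' ≤ k + 1 →
      ‖iteratedFDeriv ℝ j ψ x‖ * ‖iteratedFDeriv ℝ l' ψ x‖ ≤ M * S := by
    intro j l' hj hl' hsum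
    rcases le_total j l' with h | h
    · calc ‖iteratedFDeriv ℝ j ψ x‖ * ‖iteratedFDeriv ℝ l' ψ x‖
          ≤ M * ‖iteratedFDeriv ℝ l' ψ x‖ :=
            mul_le_mul_of_nonneg_right (hMb j (by omega) x) (norm_nonneg _)
        _ ≤ M * S := mul_le_mul_of_nonneg_left (hSmem l' hl' (by omega)) hM0
    · calc ‖iteratedFDeriv ℝ j ψ x‖ * ‖iteratedFDeriv ℝ l' ψ x‖
          ≤ ‖iteratedFDeriv ℝ j ψ x‖ * M :=
            mul_le_mul_of_nonneg_left (hMb l' (by omega) x) (norm_nonneg _)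
        _ = M * ‖iteratedFDeriv ℝ j ψ x‖ := by ring
        _ ≤ M * S := mul_le_mul_of_nonneg_left (hSmem j hj (by omega)) hM0
  have hSl : ∀ l, 1 ≤ l → l ≤ k →
      (∑ j ∈ Finset.Icc 1 l, ‖iteratedFDeriv ℝ j ψ x‖) * ‖iteratedFDeriv ℝ (k - l + 1) ψ x‖
        ≤ m * M * S := by
    intro l hl1 hlk
    rw [Finset.sum_mul]
    calc (∑ j ∈ Finset.Icc 1 l, ‖iteratedFDeriv ℝ j ψ x‖ * ‖iteratedFDeriv ℝ (k - l + 1) ψ x‖)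
        ≤ ∑ j ∈ Finset.Icc 1 l, M * S := by
          apply Finset.sum_le_sum
          intro j hj
          rw [Finset.mem_Icc] at hj
          exact hprod j (k - l + 1) hj.1 (by omega) (by omega)
      _ = (l : ℝ) * (M * S) := by
          rw [Finset.sum_const, Nat.card_Icc]
          simp
      _ ≤ (m : ℝ) * (M * S) := by
          apply mul_le_mul_of_nonneg_right _ (mul_nonneg hM0 hS0)
          exact_mod_cast Nat.cast_le.mpr (by omega)
      _ = m * M * S := by ring
  -- bound for each Leibniz term
  have hterm : ∀ l ∈ Finset.range (k + 1),
      (k.choose l : ℝ) * ‖iteratedFDeriv ℝ l (fun y => G' (ψ y)) x‖ *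
          ‖iteratedFDeriv ℝ (k - l) (fderiv ℝ ψ) x‖
        ≤ (k.choose l : ℝ) * (B * (1 + m * M) ^ (k + 1) * 4 ^ (k * k) * S) := by
    intro l hl
    rw [Finset.mem_range] at hl
    rw [mul_assoc]
    apply mul_le_mul_of_nonneg_left _ (by positivity)
    have hgn : ‖iteratedFDeriv ℝ (k - l) (fderiv ℝ ψ) x‖
        = ‖iteratedFDeriv ℝ (k - l + 1) ψ x‖ := norm_iteratedFDeriv_fderiv
    rw [hgn]
    rcases Nat.eq_zero_or_pos l with rfl | hl1
    · -- l = 0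
      have h0 : ‖iteratedFDeriv ℝ 0 (fun y => G' (ψ y)) x‖ = |G' (ψ x)| := by
        rw [norm_iteratedFDeriv_zero]; rfl
      have hGB : |G' (ψ x)| ≤ B := by
        have : G' (ψ x) = iteratedDerivWithin 1 G I (ψ x) :=
          (congrFun iteratedDerivWithin_one (ψ x)).symm
        rw [this]
        exact hGb _ (hmem x) 1 (by omega)
      have hψS : ‖iteratedFDeriv ℝ (k - 0 + 1) ψ x‖ ≤ S := hSmem _ (by omega) (by omega)
      have e1 : (1:ℝ) ≤ (1 + m * M) ^ (k+1) := one_le_pow₀ hbase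
      have e2 : (1:ℝ) ≤ (4:ℝ) ^ (k*k) := one_le_pow₀ (by norm_num)
      calc ‖iteratedFDeriv ℝ 0 (fun y => G' (ψ y)) x‖ * ‖iteratedFDeriv ℝ (k - 0 + 1) ψ x‖
          ≤ B * S := by
            rw [h0]
            exact mul_le_mul hGB hψS (norm_nonneg _) hB0
        _ = (B * S) * 1 := by ring
        _ ≤ (B * S) * ((1 + m * M) ^ (k + 1) * 4 ^ (k * k)) := by
            apply mul_le_mul_of_nonneg_left _ (mul_nonneg hB0 hS0)
            calc (1:ℝ) ≤ (1 + m * M) ^ (k + 1) := e1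
              _ = (1 + m * M) ^ (k + 1) * 1 := by ring
              _ ≤ (1 + m * M) ^ (k + 1) * 4 ^ (k * k) :=
                  mul_le_mul_of_nonneg_left e2 (by positivity)
        _ = B * (1 + m * M) ^ (k + 1) * 4 ^ (k * k) * S := by ring
    · -- 1 ≤ l
      have hcomp : (fun y => G' (ψ y)) = G' ∘ ψ := rfl
      have h1 : ‖iteratedFDeriv ℝ l (fun y => G' (ψ y)) x‖
          ≤ B * (1 + m * M) ^ l * 4 ^ (l * l) *
            ∑ j ∈ Finset.Icc 1 l, ‖iteratedFDeriv ℝ j ψ x‖ := by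
        rw [hcomp]
        exact IH l (by omega) hl1 (by omega) G'
          (hG'cd.of_le (by exact_mod_cast Nat.cast_le.mpr (by omega : l ≤ k)))
          (fun s hs j hj => hG'b s hs j (by omega)) x
      have h2 := hSl l hl1 (by omega)
      have h3 : (1 + m * M) ^ l * (m * M) ≤ (1 + m * M) ^ (k + 1) := by
        calc (1 + m * M) ^ l * (m * M) ≤ (1 + m * M) ^ l * (1 + m * M) := by
              apply mul_le_mul_of_nonneg_left (by linarith) (pow_nonneg (by linarith) l)
          _ = (1 + m * M) ^ (l + 1) := by rw [pow_succ]
          _ ≤ (1 + m * M) ^ (k + 1) := pow_le_pow_right₀ hbase (by omega)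
      have h4 : (4:ℝ) ^ (l * l) ≤ 4 ^ (k * k) := by
        apply pow_le_pow_right₀ (by norm_num) (by nlinarith)
      calc ‖iteratedFDeriv ℝ l (fun y => G' (ψ y)) x‖ * ‖iteratedFDeriv ℝ (k - l + 1) ψ x‖
          ≤ (B * (1 + m * M) ^ l * 4 ^ (l * l) *
              ∑ j ∈ Finset.Icc 1 l, ‖iteratedFDeriv ℝ j ψ x‖) *
              ‖iteratedFDeriv ℝ (k - l + 1) ψ x‖ :=
            mul_le_mul_of_nonneg_right h1 (norm_nonneg _)
        _ = B * (1 + m * M) ^ l * 4 ^ (l * l) *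
              ((∑ j ∈ Finset.Icc 1 l, ‖iteratedFDeriv ℝ j ψ x‖) *
                ‖iteratedFDeriv ℝ (k - l + 1) ψ x‖) := by ring
        _ ≤ B * (1 + m * M) ^ l * 4 ^ (l * l) * (m * M * S) := by
            apply mul_le_mul_of_nonneg_left h2
            exact mul_nonneg (mul_nonneg hB0 (pow_nonneg (by linarith) l)) (by positivity)
        _ = ((1 + m * M) ^ l * (m * M)) * (B * 4 ^ (l * l) * S) := by ring
        _ ≤ (1 + m * M) ^ (k + 1) * (B * 4 ^ (l * l) * S) := by
            apply mul_le_mul_of_nonneg_right h3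
            exact mul_nonneg (mul_nonneg hB0 (by positivity)) hS0
        _ = (4:ℝ) ^ (l * l) * ((1 + m * M) ^ (k + 1) * B * S) := by ring
        _ ≤ (4:ℝ) ^ (k * k) * ((1 + m * M) ^ (k + 1) * B * S) := by
            apply mul_le_mul_of_nonneg_right h4
            exact mul_nonneg (mul_nonneg (pow_nonneg (by linarith) _) hB0) hS0
        _ = B * (1 + m * M) ^ (k + 1) * 4 ^ (k * k) * S := by ring
  -- sum up
  have hsum2 : ∑ l ∈ Finset.range (k + 1),
      (k.choose l : ℝ) * (B * (1 + m * M) ^ (k + 1) * 4 ^ (k * k) * S)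
      = 2 ^ k * (B * (1 + m * M) ^ (k + 1) * 4 ^ (k * k) * S) := by
    rw [← Finset.sum_mul]
    congr 1
    rw [← Nat.cast_sum, Nat.sum_range_choose]
    push_cast
    ring
  have hpow : (2:ℝ)^k * 4^(k*k) ≤ 4^((k+1)*(k+1)) := by
    have h1 : (2:ℝ)^k ≤ 4^k := pow_le_pow_left₀ (by norm_num) (by norm_num) k
    calc (2:ℝ)^k * 4^(k*k) ≤ 4^k * 4^(k*k) :=
          mul_le_mul_of_nonneg_right h1 (by positivity)
      _ = 4^(k*k+k) := by rw [← pow_add]; ring_nf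
      _ ≤ 4^((k+1)*(k+1)) := pow_le_pow_right₀ (by norm_num) (by nlinarith)
  calc ‖iteratedFDeriv ℝ k (fun y => G' (ψ y) • fderiv ℝ ψ y) x‖
      ≤ ∑ l ∈ Finset.range (k + 1), (k.choose l : ℝ) *
          ‖iteratedFDeriv ℝ l (fun y => G' (ψ y)) x‖ *
          ‖iteratedFDeriv ℝ (k - l) (fderiv ℝ ψ) x‖ := hsmul
    _ ≤ ∑ l ∈ Finset.range (k + 1),
          (k.choose l : ℝ) * (B * (1 + m * M) ^ (k + 1) * 4 ^ (k * k) * S) :=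
        Finset.sum_le_sum hterm
    _ = 2 ^ k * (B * (1 + m * M) ^ (k + 1) * 4 ^ (k * k) * S) := hsum2
    _ = (2 ^ k * 4 ^ (k * k)) * (B * (1 + m * M) ^ (k + 1) * S) := by ring
    _ ≤ 4 ^ ((k+1)*(k+1)) * (B * (1 + m * M) ^ (k + 1) * S) := by
        apply mul_le_mul_of_nonneg_right hpow
        exact mul_nonneg (mul_nonneg hB0 (pow_nonneg (by linarith) _)) hS0
    _ = B * (1 + m * M) ^ (k + 1) * 4 ^ ((k + 1) * (k + 1)) * S := by ring


/-- (Moser-type composition estimate.)  Let `A₁ < 0 < A₂`, `m ≥ 1`,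
and let `F : [A₁,A₂] → ℝ` be `C^m` with all derivatives up to order `m` bounded by `B`
on `[A₁,A₂]`.  Let `ψ ∈ C^m(ℝⁿ) ∩ H^m(ℝⁿ)` take values in `[A₁,A₂]`, with all
derivatives up to order `⌈m/2⌉` bounded by `M` in `L^∞`.  Then `F(ψ) - F(0) ∈ H^m(ℝⁿ)`
and `‖F(ψ) - F(0)‖_{H^m} ≤ Λ(B, M) ‖ψ‖_{H^m}` for a continuous function `Λ`
independent of `ψ` (and of `F`, which enters only through `B`). -/
theorem moser_composition_estimate (n m : ℕ) (hm : 1 ≤ m) (A₁ A₂ : ℝ)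
    (hA₁ : A₁ < 0) (hA₂ : 0 < A₂) :
    ∃ Λ : ℝ → ℝ → ℝ, (Continuous fun q : ℝ × ℝ => Λ q.1 q.2) ∧
      ∀ (F : ℝ → ℝ) (B : ℝ) (ψ : EuclideanSpace ℝ (Fin n) → ℝ) (M : ℝ),
        ContDiffOn ℝ (m : ℕ∞) F (Icc A₁ A₂) →
        (∀ s ∈ Icc A₁ A₂, ∀ j ≤ m, |iteratedDerivWithin j F (Icc A₁ A₂) s| ≤ B) →
        ContDiff ℝ (m : ℕ∞) ψ →
        MemHm n m ψ →
        (∀ x, ψ x ∈ Icc A₁ A₂) →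
        (∀ i ≤ (m + 1) / 2, ∀ x, ‖iteratedFDeriv ℝ i ψ x‖ ≤ M) →
        MemHm n m (fun x => F (ψ x) - F 0) ∧
          hmNorm n m (fun x => F (ψ x) - F 0) ≤ Λ B M * hmNorm n m ψ := by
  have hA : A₁ < A₂ := hA₁.trans hA₂
  have hUD : UniqueDiffOn ℝ (Icc A₁ A₂) := uniqueDiffOn_Icc hA
  -- the constant
  refine ⟨fun B M => (m + 1) * (|B| * (1 + m * |M|) ^ m * 4 ^ (m * m)), ?_, ?_⟩
  · exact continuous_const.mul (((continuous_abs.comp continuous_fst).mul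
      ((continuous_const.add (continuous_const.mul
        (continuous_abs.comp continuous_snd))).pow m)).mul continuous_const)
  intro F B ψ M hF hFb hψ hH hmem hMb
  have h0I : (0:ℝ) ∈ Icc A₁ A₂ := ⟨hA₁.le, hA₂.le⟩
  have hB0 : 0 ≤ B := by
    have := hFb 0 h0I 0 (by omega)
    rw [iteratedDerivWithin_zero] at this
    exact (abs_nonneg _).trans this
  have hM0 : 0 ≤ M := (norm_nonneg _).trans (hMb 0 (by omega) 0)
  have hmM : (0:ℝ) ≤ (m:ℝ) * M := mul_nonneg (Nat.cast_nonneg m) hM0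
  have hbase : (1:ℝ) ≤ 1 + (m:ℝ) * M := by linarith
  set C : ℝ := B * (1 + m * M) ^ m * 4 ^ (m * m) with hC
  have hC0 : 0 ≤ C := mul_nonneg (mul_nonneg hB0 (pow_nonneg (by linarith) m)) (by positivity)
  have habs : (m + 1 : ℝ) * (|B| * (1 + m * |M|) ^ m * 4 ^ (m * m)) = (m + 1) * C := by
    rw [abs_of_nonneg hB0, abs_of_nonneg hM0]
  show _ ∧ _ ≤ ((m:ℝ) + 1) * (|B| * (1 + m * |M|) ^ m * 4 ^ (m * m)) * hmNorm n m ψ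
  rw [habs]
  -- smoothness of the composition
  have hFψ : ContDiff ℝ (m : ℕ∞) (F ∘ ψ) := hF.comp_contDiff hψ hmem
  set g : EuclideanSpace ℝ (Fin n) → ℝ := fun x => F (ψ x) - F 0 with hgdef
  have hg : ContDiff ℝ (m : ℕ∞) g := hFψ.sub contDiff_const
  -- for i ≥ 1 the iterated derivatives of g and F ∘ ψ agree
  have hgder : ∀ i, 1 ≤ i → i ≤ m → ∀ x,
      iteratedFDeriv ℝ i g x = iteratedFDeriv ℝ i (F ∘ ψ) x := by
    intro i hi him x
    have hFψi : ContDiff ℝ (i : ℕ∞) (F ∘ ψ) :=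
      hFψ.of_le (by exact_mod_cast Nat.cast_le.mpr him)
    have := iteratedFDeriv_add_apply (i := i) (f := g)
      (g := fun _ => F 0) (hg.of_le (by exact_mod_cast Nat.cast_le.mpr him)).contDiffAt contDiff_const.contDiffAt (x := x)
    have hgid : (g + fun _ => F 0) = F ∘ ψ := by
      funext y; simp [hgdef, Function.comp]
    rw [hgid] at this
    rw [this, iteratedFDeriv_const_of_ne (by omega : i ≠ 0)]; simp
    -- pointwise bound on all derivatives of g
  have hpt : ∀ i ≤ m, ∀ x, ‖iteratedFDeriv ℝ i g x‖ ≤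
      C * ∑ j ∈ Finset.range (m + 1), ‖iteratedFDeriv ℝ j ψ x‖ := by
    intro i him x
    have hSm0 : (0:ℝ) ≤ ∑ j ∈ Finset.range (m + 1), ‖iteratedFDeriv ℝ j ψ x‖ :=
      Finset.sum_nonneg fun _ _ => norm_nonneg _
    have hBC : B ≤ C := by
      have e1 : (1:ℝ) ≤ (1 + m * M) ^ m := one_le_pow₀ hbase
      have e2 : (1:ℝ) ≤ (4:ℝ) ^ (m * m) := one_le_pow₀ (by norm_num)
      calc B = B * 1 * 1 := by ring
        _ ≤ B * (1 + m * M) ^ m * 4 ^ (m * m) := by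
            apply mul_le_mul (mul_le_mul_of_nonneg_left e1 hB0) e2 (by norm_num)
            exact mul_nonneg hB0 (pow_nonneg (by linarith) m)
    rcases Nat.eq_zero_or_pos i with rfl | hi
    · rw [norm_iteratedFDeriv_zero]
      have hbound : ∀ s ∈ Icc A₁ A₂, ‖derivWithin F (Icc A₁ A₂) s‖ ≤ B := by
        intro s hs
        rw [Real.norm_eq_abs, ← iteratedDerivWithin_one]
        exact hFb s hs 1 hm
      have hmvt := Convex.norm_image_sub_le_of_norm_derivWithin_le
        (hF.differentiableOn (by exact_mod_cast (by omega : m ≠ 0))) hbound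
        (convex_Icc A₁ A₂) h0I (hmem x)
      have hψx : ‖ψ x - 0‖ = ‖iteratedFDeriv ℝ 0 ψ x‖ := by
        rw [norm_iteratedFDeriv_zero, sub_zero]
      have hψS : ‖iteratedFDeriv ℝ 0 ψ x‖ ≤
          ∑ j ∈ Finset.range (m + 1), ‖iteratedFDeriv ℝ j ψ x‖ :=
        Finset.single_le_sum (f := fun j => ‖iteratedFDeriv ℝ j ψ x‖)
          (fun _ _ => norm_nonneg _) (Finset.mem_range.mpr (by omega))
      calc ‖g x‖ = ‖F (ψ x) - F 0‖ := rfl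
        _ ≤ B * ‖ψ x - 0‖ := hmvt
        _ = B * ‖iteratedFDeriv ℝ 0 ψ x‖ := by rw [hψx]
        _ ≤ C * ∑ j ∈ Finset.range (m + 1), ‖iteratedFDeriv ℝ j ψ x‖ :=
            mul_le_mul hBC hψS (norm_nonneg _) hC0
    · rw [hgder i hi him x]
      have hkey := moser_pointwise hA hψ hmem hMb hB0 hM0 i hi him F
        (hF.of_le (by exact_mod_cast Nat.cast_le.mpr him))
        (fun s hs j hj => hFb s hs j (hj.trans him)) x
      have hcoef : B * (1 + m * M) ^ i * 4 ^ (i * i) ≤ C := by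
        have c1 : (1 + (m:ℝ) * M) ^ i ≤ (1 + m * M) ^ m := pow_le_pow_right₀ hbase him
        have c2 : (4:ℝ) ^ (i * i) ≤ 4 ^ (m * m) :=
          pow_le_pow_right₀ (by norm_num) (Nat.mul_le_mul him him)
        apply mul_le_mul (mul_le_mul_of_nonneg_left c1 hB0) c2 (by positivity)
        exact mul_nonneg hB0 (pow_nonneg (by linarith) m)
      have hsub : ∑ j ∈ Finset.Icc 1 i, ‖iteratedFDeriv ℝ j ψ x‖ ≤
          ∑ j ∈ Finset.range (m + 1), ‖iteratedFDeriv ℝ j ψ x‖ := by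
        apply Finset.sum_le_sum_of_subset_of_nonneg
        · intro j hj
          rw [Finset.mem_Icc] at hj
          exact Finset.mem_range.mpr (by omega)
        · exact fun _ _ _ => norm_nonneg _
      calc ‖iteratedFDeriv ℝ i (F ∘ ψ) x‖
          ≤ B * (1 + m * M) ^ i * 4 ^ (i * i) *
              ∑ j ∈ Finset.Icc 1 i, ‖iteratedFDeriv ℝ j ψ x‖ := hkey
        _ ≤ C * ∑ j ∈ Finset.range (m + 1), ‖iteratedFDeriv ℝ j ψ x‖ := by
            apply mul_le_mul hcoef hsub (Finset.sum_nonneg fun _ _ => norm_nonneg _) hC0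
  -- squared pointwise bound
  set Q : EuclideanSpace ℝ (Fin n) → ℝ :=
    fun x => ∑ j ∈ Finset.range (m + 1), ‖iteratedFDeriv ℝ j ψ x‖ ^ 2 with hQdef
  have hQint : Integrable Q :=
    integrable_finset_sum _ (fun j hj => hH j (by rw [Finset.mem_range] at hj; omega))
  have hQ0 : ∀ x, 0 ≤ Q x := fun x => Finset.sum_nonneg fun _ _ => sq_nonneg _
  have hsq : ∀ i ≤ m, ∀ x, ‖iteratedFDeriv ℝ i g x‖ ^ 2 ≤ C ^ 2 * (m + 1) * Q x := by
    intro i him x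
    have h1 := hpt i him x
    have h2 : (∑ j ∈ Finset.range (m + 1), ‖iteratedFDeriv ℝ j ψ x‖) ^ 2
        ≤ (m + 1) * Q x := by
      have := Finset.sum_mul_sq_le_sq_mul_sq (Finset.range (m + 1))
        (fun _ => (1:ℝ)) (fun j => ‖iteratedFDeriv ℝ j ψ x‖)
      simpa [hQdef] using this
    calc ‖iteratedFDeriv ℝ i g x‖ ^ 2
        ≤ (C * ∑ j ∈ Finset.range (m + 1), ‖iteratedFDeriv ℝ j ψ x‖) ^ 2 :=
          pow_le_pow_left₀ (norm_nonneg _) h1 2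
      _ = C ^ 2 * (∑ j ∈ Finset.range (m + 1), ‖iteratedFDeriv ℝ j ψ x‖) ^ 2 := by ring
      _ ≤ C ^ 2 * ((m + 1) * Q x) := mul_le_mul_of_nonneg_left h2 (by positivity)
      _ = C ^ 2 * (m + 1) * Q x := by ring
  -- integrability
  have hint : ∀ i ≤ m, Integrable fun x => ‖iteratedFDeriv ℝ i g x‖ ^ 2 := by
    intro i him
    apply Integrable.mono' (hQint.const_mul (C ^ 2 * (m + 1)))
    · exact ((hg.continuous_iteratedFDeriv
        (by exact_mod_cast Nat.cast_le.mpr him)).norm.pow 2).aestronglyMeasurable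
    · filter_upwards with x
      rw [Real.norm_eq_abs, abs_of_nonneg (by positivity)]
      exact hsq i him x
  refine ⟨fun i hi => hint i hi, ?_⟩
  -- the integral estimate
  have hQeq : ∫ x, Q x = sobolevSq n m ψ := by
    rw [hQdef, sobolevSq]
    exact integral_finset_sum _ (fun j hj => hH j (by rw [Finset.mem_range] at hj; omega))
  have hψ0 : 0 ≤ sobolevSq n m ψ := by
    apply Finset.sum_nonneg
    exact fun i _ => integral_nonneg fun x => sq_nonneg _
  have hg0 : 0 ≤ sobolevSq n m g := by
    apply Finset.sum_nonneg
    exact fun i _ => integral_nonneg fun x => sq_nonneg _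
  have hsob : sobolevSq n m g ≤ ((m + 1) * C) ^ 2 * sobolevSq n m ψ := by
    rw [sobolevSq]
    calc ∑ i ∈ Finset.range (m + 1), ∫ x, ‖iteratedFDeriv ℝ i g x‖ ^ 2
        ≤ ∑ i ∈ Finset.range (m + 1), C ^ 2 * (m + 1) * ∫ x, Q x := by
          apply Finset.sum_le_sum
          intro i hi
          rw [Finset.mem_range] at hi
          have := integral_mono (hint i (by omega)) (hQint.const_mul (C ^ 2 * (m + 1)))
            (fun x => hsq i (by omega) x)
          rwa [integral_const_mul] at this
      _ = (m + 1) * (C ^ 2 * (m + 1) * ∫ x, Q x) := by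
          rw [Finset.sum_const, Finset.card_range, nsmul_eq_mul]
          push_cast
          ring
      _ = ((m + 1) * C) ^ 2 * sobolevSq n m ψ := by
          rw [hQeq]
          push_cast
          ring
  have hfinal : 0 ≤ ((m:ℝ) + 1) * C := by positivity
  simp only [hmNorm]
  calc (sobolevSq n m g) ^ (1/2 : ℝ)
      ≤ (((m + 1) * C) ^ 2 * sobolevSq n m ψ) ^ (1/2 : ℝ) :=
        Real.rpow_le_rpow hg0 hsob (by norm_num)
    _ = (((m + 1) * C) ^ 2) ^ (1/2 : ℝ) * (sobolevSq n m ψ) ^ (1/2 : ℝ) :=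
        Real.mul_rpow (sq_nonneg _) hψ0
    _ = ((m:ℝ) + 1) * C * (sobolevSq n m ψ) ^ (1/2 : ℝ) := by
        congr 1
        rw [← Real.rpow_natCast (((m:ℝ) + 1) * C) 2, ← Real.rpow_mul hfinal]
        norm_num

end
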